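/- For bases A, B of a matroid on [n], and for a D_n-admissible order ≺ on [n] ∪ [n]* restricting to the linear order ≤ on [n]: if A ≤ B in the Gale order on k-subsets of [n], then Φ(A) ≺ Φ(B) in the Gale order on admissible n-subsets. -/

import Mathlib

/-- `J n` models `[n] ∪ [n]*` : the element `(i, false)` is `i` and `(i, true)` is `i*`. -/
abbrev J (n : ℕ) := Fin n × Bool

/-- The star involution `i ↦ i*`, `i* ↦ i`. -/
def jstar {n : ℕ} (x : J n) : J n := (x.1, !x.2)

/-- `K* = { k* : k ∈ K }`. -/
def starSet {n : ℕ} (K : Finset (J n)) : Finset (J n) := K.image jstar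

/-- A subset `K ⊆ [n] ∪ [n]*` is admissible if `K ∩ K* = ∅`. -/
def Admissible {n : ℕ} (K : Finset (J n)) : Prop := K ∩ starSet K = ∅

/-- Gale order: `A ≤ B` iff there is an injection of `A` into `B` increasing each element. -/
def GaleLE {α : Type*} (r : α → α → Prop) (A B : Finset α) : Prop :=
  ∃ f : α → α, Set.InjOn f A ∧ (∀ a ∈ A, f a ∈ B) ∧ ∀ a ∈ A, r a (f a)

/-- A `Dₙ`-admissible ordering of `[n] ∪ [n]*`: a partial order reversed by `*`,
linear except that the middle two elements (a pair `{i, i*}`) are incomparable. -/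
structure DnOrder (n : ℕ) where
  le : J n → J n → Prop
  refl : ∀ i, le i i
  trans : ∀ i j k, le i j → le j k → le i k
  antisymm : ∀ i j, le i j → le j i → i = j
  star_anti : ∀ i j, le i j → le (jstar j) (jstar i)
  almost_total : ∀ i j : J n, le i j ∨ le j i ∨ j = jstar i
  middle : ∃ i : J n, ¬ le i (jstar i) ∧ ¬ le (jstar i) i

/-- `ℬ` is the collection of bases of a matroid of rank `k` on `[n]`. -/
def MatroidBases {n : ℕ} (k : ℕ) (ℬ : Set (Finset (Fin n))) : Prop :=
  ℬ.Nonempty ∧ (∀ B ∈ ℬ, B.card = k) ∧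
    ∀ A ∈ ℬ, ∀ B ∈ ℬ, ∀ a ∈ A \ B, ∃ b ∈ B \ A, insert b (A.erase a) ∈ ℬ

/-- `Φ(B) = B ∪ ([n] \ B)*`. -/
def Phi {n : ℕ} (B : Finset (Fin n)) : Finset (J n) :=
  B.image (fun i => (i, false)) ∪ Bᶜ.image (fun i => (i, true))

open Finset

/-- A nonempty finset has a maximum element with respect to a total transitive relation. -/
lemma exists_top_of_total {α : Type*} (r : α → α → Prop)
    (htot : ∀ a b, r a b ∨ r b a) (htr : ∀ a b c, r a b → r b c → r a c)
    (s : Finset α) (hs : s.Nonempty) : ∃ m ∈ s, ∀ x ∈ s, r x m := by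
  classical
  induction s using Finset.induction with
  | empty => exact absurd hs (by simp)
  | @insert a s ha ih =>
    rcases s.eq_empty_or_nonempty with rfl | hs'
    · refine ⟨a, by simp, ?_⟩
      intro x hx
      simp only [Finset.mem_insert, Finset.notMem_empty, or_false] at hx
      subst hx
      rcases htot x x with h | h <;> exact h
    · obtain ⟨m, hm, hmax⟩ := ih hs'
      rcases htot a m with h | h
      · refine ⟨m, Finset.mem_insert_of_mem hm, ?_⟩
        intro x hx
        rcases Finset.mem_insert.1 hx with rfl | hx
        · exact h
        · exact hmax x hx
      · refine ⟨a, Finset.mem_insert_self a s, ?_⟩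
        intro x hx
        rcases Finset.mem_insert.1 hx with rfl | hx
        · rcases htot x x with h' | h' <;> exact h'
        · exact htr x m a (hmax x hx) h

/-- Key combinatorial lemma: if `A ≤ B` in the Gale order (witnessed by an injection)
and `A`, `B` have the same cardinality, then `Bᶜ ≤ Aᶜ` in the Gale order. -/
lemma compl_gale {n : ℕ} (r : Fin n → Fin n → Prop) (hr : IsLinearOrder (Fin n) r)
    (A B : Finset (Fin n)) (hcard : A.card = B.card)
    (f : Fin n → Fin n) (hinj : Set.InjOn f A) (hmem : ∀ a ∈ A, f a ∈ B)
    (hle : ∀ a ∈ A, r a (f a)) :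
    ∃ h : Fin n → Fin n, Set.InjOn h ↑(Aᶜ) ∧ (∀ x ∈ Aᶜ, h x ∈ Bᶜ) ∧ ∀ x ∈ Aᶜ, r (h x) x := by
  classical
  haveI := hr
  set t : {x // x ∈ Aᶜ} → Finset (Fin n) := fun x => Bᶜ.filter (fun b => r b x.1) with ht
  have hall : ∀ s : Finset {x // x ∈ Aᶜ}, s.card ≤ (s.biUnion t).card := by
    intro s
    rcases s.eq_empty_or_nonempty with rfl | hs
    · simp
    · obtain ⟨ms, hms, hmax⟩ := exists_top_of_total
        (fun x y : {x // x ∈ Aᶜ} => r x.1 y.1)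
        (fun a b => total_of r a.1 b.1) (fun a b c => trans_of r) s hs
      set m := ms.1 with hm
      have h1 : s.card ≤ (Aᶜ.filter (fun x => r x m)).card := by
        apply Finset.card_le_card_of_injOn (fun x => x.1)
        · intro x hx
          simp only [Finset.mem_coe, mem_filter]
          exact ⟨x.2, hmax x hx⟩
        · exact fun x _ y _ h => Subtype.ext h
      have h2 : (Bᶜ.filter (fun b => r b m)).card ≤ (s.biUnion t).card := by
        apply Finset.card_le_card
        intro b hb
        exact Finset.mem_biUnion.2 ⟨ms, hms, hb⟩
      have hpart : ∀ C : Finset (Fin n), (C.filter (fun x => r x m)).card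
          + (Cᶜ.filter (fun x => r x m)).card = (univ.filter (fun x => r x m)).card := by
        intro C
        rw [← Finset.card_union_of_disjoint
          (Finset.disjoint_filter_filter disjoint_compl_right),
          ← Finset.filter_union, Finset.union_compl]
      have hAB : (B.filter (fun x => r x m)).card ≤ (A.filter (fun x => r x m)).card := by
        have hrest : (A.filter (fun x => ¬ r x m)).card
            ≤ (B.filter (fun x => ¬ r x m)).card := by
          apply Finset.card_le_card_of_injOn f
          · intro a ha
            simp only [Finset.mem_coe, mem_filter] at ha ⊢
            exact ⟨hmem a ha.1, fun hf => ha.2 (trans_of r (hle a ha.1) hf)⟩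
          · intro x hx y hy hxy
            exact hinj (by simpa using (Finset.mem_filter.1 hx).1)
              (by simpa using (Finset.mem_filter.1 hy).1) hxy
        have hA := Finset.card_filter_add_card_filter_not
          (s := A) (p := fun x => r x m)
        have hB := Finset.card_filter_add_card_filter_not
          (s := B) (p := fun x => r x m)
        omega
      have hcompl : (Aᶜ.filter (fun x => r x m)).card
          ≤ (Bᶜ.filter (fun x => r x m)).card := by
        have := hpart A; have := hpart B; omega
      exact le_trans h1 (le_trans hcompl h2)
  obtain ⟨F, hFinj, hFmem⟩ := (Finset.all_card_le_biUnion_card_iff_exists_injective t).1 hall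
  refine ⟨fun x => if hx : x ∈ Aᶜ then F ⟨x, hx⟩ else x, ?_, ?_, ?_⟩
  · intro x hx y hy hxy
    simp only [Finset.mem_coe] at hx hy
    simp only [dif_pos hx, dif_pos hy] at hxy
    exact congrArg Subtype.val (hFinj hxy)
  · intro x hx
    simp only [dif_pos hx]
    exact (Finset.mem_filter.1 (hFmem ⟨x, hx⟩)).1
  · intro x hx
    simp only [dif_pos hx]
    exact (Finset.mem_filter.1 (hFmem ⟨x, hx⟩)).2

lemma mem_Phi_false {n : ℕ} (C : Finset (Fin n)) (i : Fin n) :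
    (i, false) ∈ Phi C ↔ i ∈ C := by
  simp [Phi, Prod.ext_iff]

lemma mem_Phi_true {n : ℕ} (C : Finset (Fin n)) (i : Fin n) :
    (i, true) ∈ Phi C ↔ i ∈ Cᶜ := by
  simp [Phi, Prod.ext_iff]

/-- for bases `A`, `B` of a matroid on `[n]` and a `Dₙ`-admissible order
restricting to the linear order `≤` on `[n]`: if `A ≤ B` in the Gale order on `k`-subsets
of `[n]`, then `Φ(A) ≺ Φ(B)` in the Gale order on admissible `n`-subsets. -/
theorem gale_le_phi (n k : ℕ) (ℬ : Set (Finset (Fin n))) (h : MatroidBases k ℬ)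
    (ro : Fin n → Fin n → Prop) (hro : IsLinearOrder (Fin n) ro)
    (d : DnOrder n)
    (hrestrict : ∀ i j : Fin n, d.le (i, false) (j, false) ↔ ro i j)
    (A B : Finset (Fin n)) (hA : A ∈ ℬ) (hB : B ∈ ℬ)
    (hg : GaleLE ro A B) :
    GaleLE d.le (Phi A) (Phi B) := by
  classical
  obtain ⟨f, hfinj, hfmem, hfle⟩ := hg
  have hcard : A.card = B.card := by rw [h.2.1 A hA, h.2.1 B hB]
  obtain ⟨g, hginj, hgmem, hgle⟩ := compl_gale ro hro A B hcard f hfinj hfmem hfle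
  refine ⟨fun x => if x.2 then (g x.1, true) else (f x.1, false), ?_, ?_, ?_⟩
  · rintro ⟨i, bi⟩ hx ⟨j, bj⟩ hy hxy
    simp only [Finset.mem_coe] at hx hy
    cases bi <;> cases bj <;>
      simp only [if_true, if_false, Bool.false_eq_true, Prod.mk.injEq] at hxy
    · rw [mem_Phi_false] at hx hy
      exact Prod.ext (hfinj hx hy hxy.1) rfl
    · exact absurd hxy.2 (by simp)
    · exact absurd hxy.2 (by simp)
    · rw [mem_Phi_true] at hx hy
      exact Prod.ext (hginj hx hy hxy.1) rfl
  · rintro ⟨i, bi⟩ hx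
    cases bi
    · rw [mem_Phi_false] at hx
      simpa [mem_Phi_false] using hfmem i hx
    · rw [mem_Phi_true] at hx
      simpa [mem_Phi_true] using hgmem i hx
  · rintro ⟨i, bi⟩ hx
    cases bi
    · rw [mem_Phi_false] at hx
      simpa using (hrestrict i (f i)).2 (hfle i hx)
    · rw [mem_Phi_true] at hx
      have h1 : d.le (g i, false) (i, false) := (hrestrict (g i) i).2 (hgle i hx)
      have h2 := d.star_anti _ _ h1
      simpa [jstar] using h2
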